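/- arXiv:2303.04122 — 2 statements merged into one kernel-verified Lean document; each statement's English description precedes it below -/
import Mathlib

section
/- For every integer n ≥ 1 and k ≥ 1, the sum of the (2k−1)-th powers of the first 2n positive integers satisfies S_{2k−1}(2n) = (2n+1)·n^{2k−1} + 2·Σ_{j=1}^{k−1} C(2k−1, 2j) · S_{2j} · n^{2k−2j−1}, where S_{2j} = Σ_{r=1}^{n} r^{2j} and S_{2k−1}(2n) = Σ_{r=1}^{2n} r^{2k−1}. -/
-- Σ over Icc 1 N equals Σ over range N shifted
private lemma icc_to_range (N : ℕ) (f : ℕ → ℚ) :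
    ∑ r ∈ Finset.Icc 1 N, f r = ∑ i ∈ Finset.range N, f (i + 1) := by
  induction N with
  | zero => simp
  | succ N ih =>
    rw [Finset.sum_Icc_succ_top (by omega), ih, Finset.sum_range_succ]

-- extract even-index terms
private lemma even_sum (k : ℕ) (f : ℕ → ℚ) :
    ∑ i ∈ Finset.range (2 * k), (if Even i then f i else 0)
      = ∑ j ∈ Finset.range k, f (2 * j) := by
  induction k with
  | zero => simp
  | succ k ih =>
    have h2 : 2 * (k + 1) = (2 * k + 1) + 1 := by ring
    rw [h2, Finset.sum_range_succ, Finset.sum_range_succ, Finset.sum_range_succ, ih]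
    have he : Even (2 * k) := even_two_mul k
    have ho : ¬ Even (2 * k + 1) := by simp [Nat.even_add_one, he]
    simp [he, ho]

-- key binomial identity for odd exponent
private lemma key (k : ℕ) (hk : 1 ≤ k) (x y : ℚ) :
    (x + y) ^ (2 * k - 1) + (x - y) ^ (2 * k - 1)
      = 2 * ∑ j ∈ Finset.range k,
          ((2 * k - 1).choose (2 * j) : ℚ) * y ^ (2 * j) * x ^ (2 * k - 1 - 2 * j) := by
  set m := 2 * k - 1 with hm
  have hm1 : m + 1 = 2 * k := by omega
  have h1 : (x + y) ^ m = ∑ i ∈ Finset.range (m + 1),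
      y ^ i * x ^ (m - i) * (m.choose i : ℚ) := by
    rw [add_comm x y, add_pow]
  have h2 : (x - y) ^ m = ∑ i ∈ Finset.range (m + 1),
      (-1 : ℚ) ^ i * (y ^ i * x ^ (m - i) * (m.choose i : ℚ)) := by
    rw [sub_eq_add_neg, add_comm x (-y), add_pow]
    refine Finset.sum_congr rfl fun i _ => ?_
    rw [neg_pow]; ring
  rw [h1, h2, ← Finset.sum_add_distrib, Finset.mul_sum, hm1,
      ← even_sum k (fun i => 2 * ((m.choose i : ℚ) * y ^ i * x ^ (m - i)))]
  refine Finset.sum_congr rfl fun i _ => ?_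
  by_cases h : Even i
  · rw [if_pos h, h.neg_one_pow]; ring
  · rw [if_neg h, (Nat.not_even_iff_odd.mp h).neg_one_pow]; ring

theorem stmt_16 (n k : ℕ) (hn : 1 ≤ n) (hk : 1 ≤ k) :
    (∑ r ∈ Finset.Icc 1 (2 * n), (r : ℚ) ^ (2 * k - 1)) =
    (2 * (n : ℚ) + 1) * (n : ℚ) ^ (2 * k - 1) +
      2 * ∑ j ∈ Finset.Icc 1 (k - 1), (Nat.choose (2 * k - 1) (2 * j) : ℚ) *
        (∑ r ∈ Finset.Icc 1 n, (r : ℚ) ^ (2 * j)) * (n : ℚ) ^ (2 * k - 2 * j - 1) := by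
  set m := 2 * k - 1 with hmdef
  have hm1 : 1 ≤ m := by omega
  -- reflection: Σ_{i<n} (n - (i+1))^m = Σ_{i<n} (i+1)^m - n^m
  have refl : ∑ i ∈ Finset.range n, ((n : ℚ) - (i + 1)) ^ m
      = ∑ i ∈ Finset.range n, ((i : ℚ) + 1) ^ m - (n : ℚ) ^ m := by
    have h1 : ∑ i ∈ Finset.range n, ((n : ℚ) - (i + 1)) ^ m
        = ∑ j ∈ Finset.range n, ((j : ℚ)) ^ m := by
      rw [← Finset.sum_range_reflect (fun j => ((j : ℚ)) ^ m) n]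
      refine Finset.sum_congr rfl fun i hi => ?_
      have : i < n := Finset.mem_range.mp hi
      have he : n - 1 - i = n - (i + 1) := by omega
      have : ((n - 1 - i : ℕ) : ℚ) = (n : ℚ) - (i + 1) := by
        rw [he, Nat.cast_sub (by omega)]; push_cast; ring
      rw [this]
    have h2 : ∑ j ∈ Finset.range (n + 1), ((j : ℚ)) ^ m
        = ∑ j ∈ Finset.range n, ((j : ℚ)) ^ m + (n : ℚ) ^ m := Finset.sum_range_succ _ n
    have h3 : ∑ j ∈ Finset.range (n + 1), ((j : ℚ)) ^ m
        = ∑ i ∈ Finset.range n, ((i : ℚ) + 1) ^ m + 0 ^ m := by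
      rw [Finset.sum_range_succ' (fun j => ((j : ℚ)) ^ m) n]
      have : ∑ i ∈ Finset.range n, (((i + 1 : ℕ)) : ℚ) ^ m
          = ∑ i ∈ Finset.range n, ((i : ℚ) + 1) ^ m :=
        Finset.sum_congr rfl fun i _ => by push_cast; ring
      rw [this]; norm_num
    rw [h1]
    have hz : (0 : ℚ) ^ m = 0 := zero_pow (by omega)
    linarith [h2, h3.symm]
  -- split the big sum
  rw [icc_to_range]
  have hsplit : (2 * n) = n + n := by ring
  rw [hsplit, Finset.sum_range_add]
  -- rewrite as paired sum plus n^m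
  have main : (∑ i ∈ Finset.range n, ((i + 1 : ℕ) : ℚ) ^ m)
      + ∑ i ∈ Finset.range n, ((n + i + 1 : ℕ) : ℚ) ^ m
      = (∑ i ∈ Finset.range n,
          (((n : ℚ) + (i + 1)) ^ m + ((n : ℚ) - (i + 1)) ^ m)) + (n : ℚ) ^ m := by
    rw [Finset.sum_add_distrib, refl]
    have : ∑ i ∈ Finset.range n, ((n + i + 1 : ℕ) : ℚ) ^ m
        = ∑ i ∈ Finset.range n, ((n : ℚ) + (i + 1)) ^ m := by
      refine Finset.sum_congr rfl fun i _ => ?_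
      push_cast; ring
    rw [this]
    have : ∑ i ∈ Finset.range n, ((i + 1 : ℕ) : ℚ) ^ m
        = ∑ i ∈ Finset.range n, ((i : ℚ) + 1) ^ m := by
      refine Finset.sum_congr rfl fun i _ => ?_
      push_cast; ring
    rw [this]; ring
  rw [main]
  -- apply key lemma and swap sums
  have pair : ∑ i ∈ Finset.range n,
      (((n : ℚ) + (i + 1)) ^ m + ((n : ℚ) - (i + 1)) ^ m)
      = ∑ j ∈ Finset.range k, 2 * ((m.choose (2 * j) : ℚ)
          * (∑ i ∈ Finset.range n, ((i : ℚ) + 1) ^ (2 * j)) * (n : ℚ) ^ (m - 2 * j)) := by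
    have := fun i : ℕ => key k hk (n : ℚ) ((i : ℚ) + 1)
    calc ∑ i ∈ Finset.range n, (((n : ℚ) + (i + 1)) ^ m + ((n : ℚ) - (i + 1)) ^ m)
        = ∑ i ∈ Finset.range n, ∑ j ∈ Finset.range k,
            2 * ((m.choose (2 * j) : ℚ) * ((i : ℚ) + 1) ^ (2 * j) * (n : ℚ) ^ (m - 2 * j)) := by
          refine Finset.sum_congr rfl fun i _ => ?_
          rw [this i, Finset.mul_sum]
      _ = ∑ j ∈ Finset.range k, ∑ i ∈ Finset.range n,
            2 * ((m.choose (2 * j) : ℚ) * ((i : ℚ) + 1) ^ (2 * j) * (n : ℚ) ^ (m - 2 * j)) :=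
          Finset.sum_comm
      _ = _ := by
          refine Finset.sum_congr rfl fun j _ => ?_
          calc ∑ i ∈ Finset.range n,
                2 * ((m.choose (2 * j) : ℚ) * ((i : ℚ) + 1) ^ (2 * j) * (n : ℚ) ^ (m - 2 * j))
              = (2 * (m.choose (2 * j) : ℚ) * (n : ℚ) ^ (m - 2 * j))
                  * ∑ i ∈ Finset.range n, ((i : ℚ) + 1) ^ (2 * j) := by
                rw [Finset.mul_sum]
                exact Finset.sum_congr rfl fun i _ => by ring
            _ = _ := by ring
  rw [pair]
  -- peel off j = 0 and convert range to Icc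
  obtain ⟨k', rfl⟩ : ∃ k', k = k' + 1 := ⟨k - 1, by omega⟩
  rw [Finset.sum_range_succ' _ k']
  have hj0 : 2 * ((m.choose (2 * 0) : ℚ)
      * (∑ i ∈ Finset.range n, ((i : ℚ) + 1) ^ (2 * 0)) * (n : ℚ) ^ (m - 2 * 0)) =
      2 * (n : ℚ) * (n : ℚ) ^ m := by
    simp [mul_assoc]
  rw [hj0]
  have hIcc : ∑ j ∈ Finset.Icc 1 (k' + 1 - 1), (Nat.choose m (2 * j) : ℚ) *
        (∑ r ∈ Finset.Icc 1 n, (r : ℚ) ^ (2 * j)) * (n : ℚ) ^ (2 * (k' + 1) - 2 * j - 1)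
      = ∑ j ∈ Finset.range k', (Nat.choose m (2 * (j + 1)) : ℚ) *
        (∑ i ∈ Finset.range n, ((i : ℚ) + 1) ^ (2 * (j + 1))) * (n : ℚ) ^ (m - 2 * (j + 1)) := by
    have : k' + 1 - 1 = k' := rfl
    rw [this, icc_to_range]
    refine Finset.sum_congr rfl fun j hj => ?_
    have hexp : 2 * (k' + 1) - 2 * (j + 1) - 1 = m - 2 * (j + 1) := by omega
    rw [hexp, icc_to_range]
    have : ∑ i ∈ Finset.range n, (((i + 1 : ℕ)) : ℚ) ^ (2 * (j + 1))
        = ∑ i ∈ Finset.range n, ((i : ℚ) + 1) ^ (2 * (j + 1)) :=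
      Finset.sum_congr rfl fun i _ => by push_cast; ring
    rw [this]
  rw [hIcc, Finset.mul_sum]
  have : ∑ j ∈ Finset.range k', 2 * ((m.choose (2 * (j + 1)) : ℚ)
      * (∑ i ∈ Finset.range n, ((i : ℚ) + 1) ^ (2 * (j + 1))) * (n : ℚ) ^ (m - 2 * (j + 1)))
      = ∑ j ∈ Finset.range k', 2 * ((Nat.choose m (2 * (j + 1)) : ℚ) *
        (∑ i ∈ Finset.range n, ((i : ℚ) + 1) ^ (2 * (j + 1))) * (n : ℚ) ^ (m - 2 * (j + 1))) := rfl
  rw [this]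
  ring
end

section
/- For every integer n ≥ 1 and k ≥ 1, Σ_{r=1}^{2n} r^{2k−1} = 4·Σ_{r=1}^{n} r^{2k−1} − n^{2k−1} + 2·Σ_{j=1}^{k−1} C(2k−1, 2j−1) · S_{2j−1} · n^{2k−2j}, where S_{2j−1} = Σ_{r=1}^{n} r^{2j−1}. -/
open Finset

lemma pair_sum' (h : ℕ → ℚ) (k : ℕ) :
    ∑ i ∈ range (2 * k), h i = ∑ j ∈ range k, (h (2 * j) + h (2 * j + 1)) := by
  induction k with
  | zero => simp
  | succ k ih =>
    rw [Nat.mul_succ, sum_range_succ, sum_range_succ, sum_range_succ, ih]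
    ring

lemma ptwise' (k : ℕ) (hk : 1 ≤ k) (x y : ℚ) :
    (y + x) ^ (2 * k - 1) - (y - x) ^ (2 * k - 1)
      = 2 * ∑ j ∈ range k,
          (Nat.choose (2 * k - 1) (2 * j + 1) : ℚ) * x ^ (2 * j + 1) * y ^ (2 * k - 2 - 2 * j) := by
  have hm : 2 * k - 1 + 1 = 2 * k := by omega
  rw [sub_eq_add_neg y x, add_pow, add_pow, ← sum_sub_distrib, hm, pair_sum',
    ← sum_range_reflect (fun j => (Nat.choose (2*k-1) (2*j+1) : ℚ) * x ^ (2*j+1) * y ^ (2*k-2-2*j)) k,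
    mul_sum]
  refine sum_congr rfl fun j hj => ?_
  simp only [mem_range] at hj
  have h1 : 2 * k - 1 - 2 * j = 2 * (k - 1 - j) + 1 := by omega
  have h2 : 2 * k - 2 - 2 * (k - 1 - j) = 2 * j := by omega
  have h3 : 2 * k - 1 - (2 * j + 1) = 2 * (k - 1 - j) := by omega
  have hc : ((2*k-1).choose (2*j) : ℚ) = ((2*k-1).choose (2*(k-1-j)+1) : ℚ) := by
    rw [← Nat.choose_symm (by omega : 2*j ≤ 2*k-1), h1]
  rw [h1, h2, h3, hc]
  rw [Odd.neg_pow ⟨k-1-j, by ring⟩, Even.neg_pow ⟨k-1-j, by ring⟩]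
  ring

theorem stmt_17 (n k : ℕ) (hn : 1 ≤ n) (hk : 1 ≤ k) :
    (∑ r ∈ Finset.Icc 1 (2 * n), (r : ℚ) ^ (2 * k - 1)) =
    4 * (∑ r ∈ Finset.Icc 1 n, (r : ℚ) ^ (2 * k - 1)) - (n : ℚ) ^ (2 * k - 1) +
      2 * ∑ j ∈ Finset.Icc 1 (k - 1), (Nat.choose (2 * k - 1) (2 * j - 1) : ℚ) *
        (∑ r ∈ Finset.Icc 1 n, (r : ℚ) ^ (2 * j - 1)) * (n : ℚ) ^ (2 * k - 2 * j) := by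
  obtain ⟨K, rfl⟩ : ∃ K, k = K + 1 := ⟨k - 1, by omega⟩
  set m := 2 * (K + 1) - 1 with hm
  set S := ∑ r ∈ Icc 1 n, (r : ℚ) ^ m with hS
  have hIoc : Finset.Icc 1 n = Finset.Ioc 0 n := by rw [← Finset.Icc_add_one_left_eq_Ioc, zero_add]
  -- split the big sum
  have hshift : (∑ r ∈ Ioc n (2 * n), (r : ℚ) ^ m) = ∑ r ∈ Icc 1 n, ((n : ℚ) + r) ^ m := by
    have h2 : Finset.Ioc n (2 * n) = Finset.map (addLeftEmbedding n) (Finset.Ioc 0 n) := by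
      rw [Finset.map_add_left_Ioc]
      congr 1 <;> omega
    rw [h2, Finset.sum_map, hIoc]
    refine sum_congr rfl fun r hr => ?_
    simp only [addLeftEmbedding_apply]
    push_cast
    ring_nf
  have hA : (∑ r ∈ Icc 1 (2 * n), (r : ℚ) ^ m)
      = S + ∑ r ∈ Icc 1 n, ((n : ℚ) + r) ^ m := by
    have h0 : Finset.Icc 1 (2 * n) = Finset.Ioc 0 (2 * n) := by
      rw [← Finset.Icc_add_one_left_eq_Ioc, zero_add]
    rw [h0, ← Finset.sum_Ioc_consecutive (fun r => (r : ℚ) ^ m) (Nat.zero_le n)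
      (by omega : n ≤ 2 * n), hshift, hS, hIoc]
  -- reflected sum
  have hB : (∑ r ∈ Icc 1 n, ((n : ℚ) - r) ^ m) = S - (n : ℚ) ^ m := by
    have h1 : (∑ r ∈ Icc 1 n, ((n : ℚ) - r) ^ m) = ∑ r ∈ range n, (r : ℚ) ^ m := by
      refine Finset.sum_nbij' (fun r => n - r) (fun r => n - r) ?_ ?_ ?_ ?_ ?_
      · intro a ha; simp only [mem_Icc] at ha; simp only [mem_range]; omega
      · intro a ha; simp only [mem_range] at ha; simp only [mem_Icc]; omega
      · intro a ha; simp only [mem_Icc] at ha; show n - (n - a) = a; omega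
      · intro a ha; simp only [mem_range] at ha; show n - (n - a) = a; omega
      · intro a ha; simp only [mem_Icc] at ha
        show ((n : ℚ) - a) ^ m = ((n - a : ℕ) : ℚ) ^ m
        rw [Nat.cast_sub (by omega : a ≤ n)]
    have h2 : ∑ r ∈ range (n + 1), (r : ℚ) ^ m = S := by
      rw [hS, hIoc, Finset.range_eq_Ico, Finset.Ico_add_one_right_eq_Icc,
        Finset.Icc_eq_cons_Ioc (Nat.zero_le n), Finset.sum_cons]
      simp [zero_pow (show m ≠ 0 by omega)]
    rw [h1, ← h2, Finset.sum_range_succ]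
    ring
  -- key pointwise identity summed
  have hkey : (∑ r ∈ Icc 1 n, ((n : ℚ) + r) ^ m) - (∑ r ∈ Icc 1 n, ((n : ℚ) - r) ^ m)
      = 2 * ∑ j ∈ range (K + 1), ((m.choose (2 * j + 1) : ℚ) *
          (∑ r ∈ Icc 1 n, (r : ℚ) ^ (2 * j + 1)) * (n : ℚ) ^ (2 * (K + 1) - 2 - 2 * j)) := by
    rw [← sum_sub_distrib]
    have h3 : ∀ r ∈ Icc 1 n, ((n : ℚ) + r) ^ m - ((n : ℚ) - r) ^ m
        = ∑ j ∈ range (K + 1), 2 * ((m.choose (2 * j + 1) : ℚ) *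
            (r : ℚ) ^ (2 * j + 1) * (n : ℚ) ^ (2 * (K + 1) - 2 - 2 * j)) := by
      intro r _
      rw [ptwise' (K + 1) (by omega) (r : ℚ) (n : ℚ), mul_sum]
    rw [sum_congr rfl h3, Finset.sum_comm, mul_sum]
    refine sum_congr rfl fun j hj => ?_
    simp only [Finset.mul_sum, Finset.sum_mul]
  -- split top term of the j-sum and identify with the Icc sum
  have hsplit : (∑ j ∈ range (K + 1), ((m.choose (2 * j + 1) : ℚ) *
          (∑ r ∈ Icc 1 n, (r : ℚ) ^ (2 * j + 1)) * (n : ℚ) ^ (2 * (K + 1) - 2 - 2 * j)))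
      = (∑ j ∈ Finset.Icc 1 (K + 1 - 1), (Nat.choose m (2 * j - 1) : ℚ) *
          (∑ r ∈ Finset.Icc 1 n, (r : ℚ) ^ (2 * j - 1)) * (n : ℚ) ^ (2 * (K + 1) - 2 * j)) + S := by
    rw [Finset.sum_range_succ]
    congr 1
    · rw [show Finset.Icc 1 (K + 1 - 1) = Finset.Ico 1 (K + 1) from by rw [Finset.Ico_add_one_right_eq_Icc, Nat.add_sub_cancel],
        Finset.sum_Ico_eq_sum_range]
      refine sum_congr (by norm_num) fun j hj => ?_
      simp only [mem_range] at hj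
      have e1 : 2 * (1 + j) - 1 = 2 * j + 1 := by omega
      have e2 : 2 * (K + 1) - 2 * (1 + j) = 2 * (K + 1) - 2 - 2 * j := by omega
      rw [e1, e2]
    · have e1 : 2 * K + 1 = m := by omega
      have e2 : 2 * (K + 1) - 2 - 2 * K = 0 := by omega
      rw [e2, e1, Nat.choose_self]
      simp [hS, hm]
  linarith [hA, hB, hkey, hsplit]
end
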